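/- Generalized Fubini theorem for integrable functions: Let f : X×Y → ℝ be R_★-integrable, where R_★ is the extension of the product measure P×Q to 𝔄★𝔅 = σ((𝔄⊗𝔅) ∪ M*). Then f is nearly separately integrable (f(·,y) is P-integrable for Q-a.e. y and f(x,·) is Q-integrable for P-a.e. x) and ∫_{X×Y} f dR_★ = ∫_Y (∫_X f(x,y) dP(x)) dQ(y) = ∫_X (∫_Y f(x,y) dQ(y)) dP(x). -/

import Mathlib

open MeasureTheory Set
open scoped symmDiff ENNReal

/-- The σ-ideal `M*` of nil sets. -/
def nilStar {X Y : Type*} [MeasurableSpace X] [MeasurableSpace Y]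
    (P : Measure X) (Q : Measure Y) : Set (Set (X × Y)) :=
  {E | (∃ N : Set X, MeasurableSet N ∧ P N = 0 ∧ ∀ x ∉ N, Q {y | (x, y) ∈ E} = 0) ∧
       (∃ M : Set Y, MeasurableSet M ∧ Q M = 0 ∧ ∀ y ∉ M, P {x | (x, y) ∈ E} = 0)}

/-- The σ-algebra `𝔄★𝔅 = σ((𝔄⊗𝔅) ∪ M*)`. -/
def bigStarSigma {X Y : Type*} [MeasurableSpace X] [MeasurableSpace Y]
    (P : Measure X) (Q : Measure Y) : MeasurableSpace (X × Y) :=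
  MeasurableSpace.generateFrom ({E | MeasurableSet E} ∪ nilStar P Q)

section Aux
variable {X Y : Type*} [MeasurableSpace X] [MeasurableSpace Y] {P : Measure X} {Q : Measure Y}

lemma nilStar_mono {E F : Set (X × Y)} (hEF : E ⊆ F) (hF : F ∈ nilStar P Q) :
    E ∈ nilStar P Q := by
  obtain ⟨⟨N, hNm, hN0, hNx⟩, ⟨M, hMm, hM0, hMy⟩⟩ := hF
  exact ⟨⟨N, hNm, hN0, fun x hx => measure_mono_null (fun y hy => hEF hy) (hNx x hx)⟩,
         ⟨M, hMm, hM0, fun y hy => measure_mono_null (fun x hx => hEF hx) (hMy y hy)⟩⟩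

lemma nilStar_iUnion {ι : Type*} [Countable ι] {E : ι → Set (X × Y)}
    (h : ∀ i, E i ∈ nilStar P Q) : (⋃ i, E i) ∈ nilStar P Q := by
  choose N hNm hN0 hNx using fun i => (h i).1
  choose M hMm hM0 hMy using fun i => (h i).2
  refine ⟨⟨⋃ i, N i, MeasurableSet.iUnion hNm, measure_iUnion_null hN0, ?_⟩,
          ⟨⋃ i, M i, MeasurableSet.iUnion hMm, measure_iUnion_null hM0, ?_⟩⟩
  · intro x hx
    have hs : {y | (x, y) ∈ ⋃ i, E i} = ⋃ i, {y | (x, y) ∈ E i} := by ext y; simp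
    rw [hs]
    exact measure_iUnion_null fun i => hNx i x fun hxi => hx (mem_iUnion.2 ⟨i, hxi⟩)
  · intro y hy
    have hs : {x | (x, y) ∈ ⋃ i, E i} = ⋃ i, {x | (x, y) ∈ E i} := by ext x; simp
    rw [hs]
    exact measure_iUnion_null fun i => hMy i y fun hyi => hy (mem_iUnion.2 ⟨i, hyi⟩)

lemma nilStar_empty : (∅ : Set (X × Y)) ∈ nilStar P Q :=
  ⟨⟨∅, .empty, measure_empty, fun _ _ => by simp⟩,
   ⟨∅, .empty, measure_empty, fun _ _ => by simp⟩⟩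

lemma nilStar_union {E F : Set (X × Y)} (hE : E ∈ nilStar P Q) (hF : F ∈ nilStar P Q) :
    E ∪ F ∈ nilStar P Q := by
  rw [Set.union_eq_iUnion]
  exact nilStar_iUnion (fun b => by cases b <;> simpa)

lemma exists_symmDiff_nil {s : Set (X × Y)}
    (hs : MeasurableSet[bigStarSigma P Q] s) :
    ∃ t : Set (X × Y), MeasurableSet t ∧ s ∆ t ∈ nilStar P Q := by
  induction s, hs using MeasurableSpace.generateFrom_induction with
  | hC t ht _ =>
    rcases ht with ht | ht
    · exact ⟨t, ht, by rw [symmDiff_self, Set.bot_eq_empty]; exact nilStar_empty⟩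
    · exact ⟨∅, .empty, by rwa [← Set.bot_eq_empty, symmDiff_bot]⟩
  | empty => exact ⟨∅, .empty, by rw [symmDiff_self, Set.bot_eq_empty]; exact nilStar_empty⟩
  | compl t ht IH =>
    obtain ⟨u, hu, hnil⟩ := IH
    exact ⟨uᶜ, hu.compl, by rwa [compl_symmDiff_compl]⟩
  | iUnion s hs IH =>
    choose u hu hnil using IH
    refine ⟨⋃ n, u n, .iUnion hu, nilStar_mono ?_ (nilStar_iUnion hnil)⟩
    intro p hp
    rcases Set.mem_symmDiff.1 hp with ⟨hp1, hp2⟩ | ⟨hp1, hp2⟩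
    · obtain ⟨n, hn⟩ := mem_iUnion.1 hp1
      exact mem_iUnion.2 ⟨n, Set.mem_symmDiff.2 (Or.inl ⟨hn, fun h => hp2 (mem_iUnion.2 ⟨n, h⟩)⟩)⟩
    · obtain ⟨n, hn⟩ := mem_iUnion.1 hp1
      exact mem_iUnion.2 ⟨n, Set.mem_symmDiff.2 (Or.inr ⟨hn, fun h => hp2 (mem_iUnion.2 ⟨n, h⟩)⟩)⟩

lemma exists_prod_measurable_version {g : X × Y → ℝ}
    (hg : Measurable[bigStarSigma P Q] g) :
    ∃ g' : X × Y → ℝ, Measurable g' ∧ {p | g p ≠ g' p} ∈ nilStar P Q := by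
  classical
  have hA : ∀ q : ℚ, MeasurableSet[bigStarSigma P Q] (g ⁻¹' Iio (q : ℝ)) :=
    fun q => hg measurableSet_Iio
  choose t ht hnil using fun q : ℚ => exists_symmDiff_nil (hA q)
  set D : Set (X × Y) := ⋃ q : ℚ, (g ⁻¹' Iio (q : ℝ)) ∆ t q with hD
  have hDnil : D ∈ nilStar P Q := nilStar_iUnion hnil
  have hoff : ∀ p ∉ D, ∀ q : ℚ, p ∈ t q ↔ g p < (q : ℝ) := by
    intro p hp q
    have hq : p ∉ (g ⁻¹' Iio (q : ℝ)) ∆ t q := fun h => hp (mem_iUnion.2 ⟨q, h⟩)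
    constructor
    · intro h1; by_contra h2; exact hq (Set.mem_symmDiff.2 (Or.inr ⟨h1, h2⟩))
    · intro h2; by_contra h1; exact hq (Set.mem_symmDiff.2 (Or.inl ⟨h2, h1⟩))
  set G : Set (X × Y) :=
    (⋃ q : ℚ, t q) ∩ (⋃ m : ℤ, ⋂ q : ℚ, ⋂ _ : q < (m : ℚ), (t q)ᶜ) with hGdef
  have hGmeas : MeasurableSet G :=
    (MeasurableSet.iUnion fun q => ht q).inter
      (MeasurableSet.iUnion fun m => MeasurableSet.iInter fun q =>
        MeasurableSet.iInter fun _ => (ht q).compl)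
  set S : X × Y → Set ℝ := fun p => (fun q : ℚ => (q : ℝ)) '' {q | p ∈ t q} with hS
  have hSne : ∀ p ∈ G, (S p).Nonempty := by
    intro p hp
    obtain ⟨q, hq⟩ := mem_iUnion.1 hp.1
    exact ⟨q, ⟨q, hq, rfl⟩⟩
  have hSbdd : ∀ p ∈ G, BddBelow (S p) := by
    intro p hp
    obtain ⟨m, hm⟩ := mem_iUnion.1 hp.2
    refine ⟨(m : ℝ), ?_⟩
    rintro x ⟨q, hq, rfl⟩
    by_contra hlt
    push_neg at hlt
    have hqm : q < (m : ℚ) := by exact_mod_cast hlt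
    exact mem_iInter.1 (mem_iInter.1 hm q) hqm hq
  set g' : X × Y → ℝ := fun p => if p ∈ G then sInf (S p) else 0 with hg'
  have hval' : ∀ p, g' p = if p ∈ G then sInf (S p) else 0 := fun p => rfl
  have hval : ∀ p ∉ D, g' p = g p := by
    intro p hp
    have hpG : p ∈ G := by
      constructor
      · obtain ⟨q, hq⟩ := exists_rat_gt (g p)
        exact mem_iUnion.2 ⟨q, (hoff p hp q).2 hq⟩
      · refine mem_iUnion.2 ⟨⌊g p⌋, mem_iInter.2 fun q => mem_iInter.2 fun hq hqt => ?_⟩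
        have h1 : g p < (q : ℝ) := (hoff p hp q).1 hqt
        have h2 : (q : ℝ) < ((⌊g p⌋ : ℤ) : ℝ) := by exact_mod_cast hq
        exact absurd h1 (not_lt.2 (le_of_lt (lt_of_lt_of_le h2 (Int.floor_le _))))
    have hinf : sInf (S p) = g p := by
      apply le_antisymm
      · by_contra hcon
        push_neg at hcon
        obtain ⟨q, hq1, hq2⟩ := exists_rat_btwn hcon
        have hqS : (q : ℝ) ∈ S p := ⟨q, (hoff p hp q).2 hq1, rfl⟩
        exact absurd (csInf_le (hSbdd p hpG) hqS) (not_le.2 hq2)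
      · refine le_csInf (hSne p hpG) ?_
        rintro x ⟨q, hq, rfl⟩
        exact le_of_lt ((hoff p hp q).1 hq)
    rw [hval' p, if_pos hpG, hinf]
  have hsubD : {p | g p ≠ g' p} ⊆ D := by
    intro p hp
    by_contra hpD
    exact hp (hval p hpD).symm
  refine ⟨g', ?_, nilStar_mono hsubD hDnil⟩
  apply measurable_of_Iio
  intro a
  have key : ∀ p ∈ G, (g' p < a ↔ ∃ q : ℚ, (q : ℝ) < a ∧ p ∈ t q) := by
    intro p hpG
    rw [hval' p, if_pos hpG, csInf_lt_iff (hSbdd p hpG) (hSne p hpG)]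
    constructor
    · rintro ⟨x, ⟨q, hq, rfl⟩, hlt⟩
      exact ⟨q, hlt, hq⟩
    · rintro ⟨q, hlt, hq⟩
      exact ⟨(q : ℝ), ⟨q, hq, rfl⟩, hlt⟩
  by_cases h0 : (0:ℝ) < a
  · have hset : g' ⁻¹' Iio a = Gᶜ ∪ (G ∩ ⋃ q : ℚ, ⋃ _ : (q : ℝ) < a, t q) := by
      ext p
      simp only [mem_preimage, mem_Iio, mem_union, mem_compl_iff, mem_inter_iff, mem_iUnion]
      by_cases hpG : p ∈ G
      · simp only [hpG, not_true_eq_false, false_or, true_and]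
        rw [key p hpG]
        constructor
        · rintro ⟨q, hlt, hq⟩; exact ⟨q, hlt, hq⟩
        · rintro ⟨q, hlt, hq⟩; exact ⟨q, hlt, hq⟩
      · have hz : g' p = 0 := by rw [hval' p, if_neg hpG]
        simp [hz, hpG, h0]
    rw [hset]
    exact hGmeas.compl.union (hGmeas.inter (MeasurableSet.iUnion fun q =>
      MeasurableSet.iUnion fun _ => ht q))
  · have hset : g' ⁻¹' Iio a = G ∩ ⋃ q : ℚ, ⋃ _ : (q : ℝ) < a, t q := by
      ext p
      simp only [mem_preimage, mem_Iio, mem_inter_iff, mem_iUnion]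
      by_cases hpG : p ∈ G
      · simp only [hpG, true_and]
        rw [key p hpG]
        constructor
        · rintro ⟨q, hlt, hq⟩; exact ⟨q, hlt, hq⟩
        · rintro ⟨q, hlt, hq⟩; exact ⟨q, hlt, hq⟩
      · have hz : g' p = 0 := by rw [hval' p, if_neg hpG]
        simp [hz, hpG, h0]
    rw [hset]
    exact hGmeas.inter (MeasurableSet.iUnion fun q => MeasurableSet.iUnion fun _ => ht q)

end Aux

/-- generalized Fubini theorem for integrable functions:
if `f : X×Y → ℝ` is `R_★`-integrable, then `f` is nearly separately integrable and
`∫ f dR_★ = ∫_Y ∫_X f dP dQ = ∫_X ∫_Y f dQ dP`. -/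
theorem generalized_fubini_integral {X Y : Type*} [MeasurableSpace X] [MeasurableSpace Y]
    (P : Measure X) (Q : Measure Y) [IsProbabilityMeasure P] [IsProbabilityMeasure Q]
    (hP : P.IsComplete) (hQ : Q.IsComplete)
    (Rstar : @Measure (X × Y) (bigStarSigma P Q))
    (hRstar : ∀ E : Set (X × Y), MeasurableSet E → Rstar E = (P.prod Q) E)
    (hRnull : ∀ M ∈ nilStar P Q, Rstar M = 0)
    (f : X × Y → ℝ) (hf : Integrable f Rstar) :
    (∀ᵐ y ∂Q, Integrable (fun x => f (x, y)) P) ∧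
    (∀ᵐ x ∂P, Integrable (fun y => f (x, y)) Q) ∧
    (∫ p, f p ∂ Rstar) = ∫ y, ∫ x, f (x, y) ∂P ∂Q ∧
    (∫ p, f p ∂ Rstar) = ∫ x, ∫ y, f (x, y) ∂Q ∂P := by
  classical
  have hm : (inferInstance : MeasurableSpace (X × Y)) ≤ bigStarSigma P Q := fun s hs =>
    MeasurableSpace.measurableSet_generateFrom (Or.inl hs)
  have htrim : Rstar.trim hm = P.prod Q :=
    Measure.ext fun s hs => by rw [trim_measurableSet_eq hm hs, hRstar s hs]
  have hsm := hf.aestronglyMeasurable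
  set g := hsm.mk f with hgdef
  have hgsm : StronglyMeasurable[bigStarSigma P Q] g := hsm.stronglyMeasurable_mk
  have hfg : f =ᵐ[Rstar] g := hsm.ae_eq_mk
  have h0 : Rstar {p | f p ≠ g p} = 0 := ae_iff.1 hfg
  obtain ⟨s', hsub, hs'meas, hs'0⟩ :=
    @exists_measurable_superset_of_null _ (bigStarSigma P Q) Rstar _ h0
  obtain ⟨Z, hZmeas, hZnil⟩ := exists_symmDiff_nil hs'meas
  have hRZ : Rstar Z = 0 := by
    have hsub2 : Z ⊆ s' ∪ (s' ∆ Z) := by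
      intro p hp
      by_cases h : p ∈ s'
      · exact Or.inl h
      · exact Or.inr (Set.mem_symmDiff.2 (Or.inr ⟨hp, h⟩))
    refine le_antisymm ?_ zero_le
    calc Rstar Z ≤ Rstar (s' ∪ (s' ∆ Z)) := measure_mono hsub2
      _ ≤ Rstar s' + Rstar (s' ∆ Z) := measure_union_le _ _
      _ = 0 := by rw [hs'0, hRnull _ hZnil, add_zero]
  have hZ0 : (P.prod Q) Z = 0 := by rw [← hRstar Z hZmeas]; exact hRZ
  obtain ⟨g', hg'meas, hg'nil⟩ := exists_prod_measurable_version hgsm.measurable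
  set W : Set (X × Y) := (s' ∆ Z) ∪ {p | g p ≠ g' p} with hWdef
  have hWnil : W ∈ nilStar P Q := nilStar_union hZnil hg'nil
  have hfg'sub : {p | f p ≠ g' p} ⊆ Z ∪ W := by
    intro p hp
    by_cases h1 : f p = g p
    · exact Or.inr (Or.inr fun h => hp (h1.trans h))
    · have hps' : p ∈ s' := hsub h1
      by_cases h2 : p ∈ Z
      · exact Or.inl h2
      · exact Or.inr (Or.inl (Set.mem_symmDiff.2 (Or.inl ⟨hps', h2⟩)))
  have hRZW : Rstar (Z ∪ W) = 0 := by
    refine le_antisymm ?_ zero_le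
    calc Rstar (Z ∪ W) ≤ Rstar Z + Rstar W := measure_union_le _ _
      _ = 0 := by rw [hRZ, hRnull _ hWnil, add_zero]
  have hae : f =ᵐ[Rstar] g' := ae_iff.2 (measure_mono_null hfg'sub hRZW)
  have hg'sm : StronglyMeasurable g' := hg'meas.stronglyMeasurable
  have hintR : Integrable g' Rstar := hf.congr hae
  have hint : Integrable g' (P.prod Q) := by
    rw [← htrim]; exact Integrable.trim hm hintR hg'sm
  -- x-sections of the bad set are a.e. null
  have hZsecx : ∀ᵐ x ∂P, Q (Prod.mk x ⁻¹' Z) = 0 := by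
    have h := (Measure.measure_prod_null hZmeas).1 hZ0
    filter_upwards [h] with x hx using hx
  have hWsecx : ∀ᵐ x ∂P, Q {y | (x, y) ∈ W} = 0 := by
    obtain ⟨⟨N, hNm, hN0, hNx⟩, -⟩ := hWnil
    have hae' : ∀ᵐ x ∂P, x ∉ N := by
      rw [ae_iff]; simpa using hN0
    filter_upwards [hae'] with x hx using hNx x hx
  have hsecx : ∀ᵐ x ∂P, Q {y | (x, y) ∈ Z ∪ W} = 0 := by
    filter_upwards [hZsecx, hWsecx] with x h1 h2
    refine le_antisymm ?_ zero_le
    have hsub3 : {y | (x, y) ∈ Z ∪ W} ⊆ (Prod.mk x ⁻¹' Z) ∪ {y | (x, y) ∈ W} := fun y hy => hy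
    calc Q {y | (x, y) ∈ Z ∪ W} ≤ Q (Prod.mk x ⁻¹' Z) + Q {y | (x, y) ∈ W} :=
          le_trans (measure_mono hsub3) (measure_union_le _ _)
      _ = 0 := by rw [h1, h2, add_zero]
  -- y-sections of the bad set are a.e. null
  have hZswap : (Q.prod P) (Prod.swap ⁻¹' Z) = 0 := by
    have hmap : (Q.prod P).map Prod.swap = P.prod Q := Measure.prod_swap
    rw [← hmap, Measure.map_apply measurable_swap hZmeas] at hZ0
    exact hZ0
  have hZsecy : ∀ᵐ y ∂Q, P {x | (x, y) ∈ Z} = 0 := by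
    have h := (Measure.measure_prod_null (measurable_swap hZmeas)).1 hZswap
    filter_upwards [h] with y hy using hy
  have hWsecy : ∀ᵐ y ∂Q, P {x | (x, y) ∈ W} = 0 := by
    obtain ⟨-, ⟨M, hMm, hM0, hMy⟩⟩ := hWnil
    have hae' : ∀ᵐ y ∂Q, y ∉ M := by
      rw [ae_iff]; simpa using hM0
    filter_upwards [hae'] with y hy using hMy y hy
  have hsecy : ∀ᵐ y ∂Q, P {x | (x, y) ∈ Z ∪ W} = 0 := by
    filter_upwards [hZsecy, hWsecy] with y h1 h2
    refine le_antisymm ?_ zero_le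
    have hsub3 : {x | (x, y) ∈ Z ∪ W} ⊆ {x | (x, y) ∈ Z} ∪ {x | (x, y) ∈ W} := fun x hx => hx
    calc P {x | (x, y) ∈ Z ∪ W} ≤ P {x | (x, y) ∈ Z} + P {x | (x, y) ∈ W} :=
          le_trans (measure_mono hsub3) (measure_union_le _ _)
      _ = 0 := by rw [h1, h2, add_zero]
  -- a.e. section equalities
  have haex : ∀ᵐ x ∂P, (fun y => f (x, y)) =ᵐ[Q] (fun y => g' (x, y)) := by
    filter_upwards [hsecx] with x hx
    refine ae_iff.2 (measure_mono_null ?_ hx)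
    intro y hy
    exact hfg'sub hy
  have haey : ∀ᵐ y ∂Q, (fun x => f (x, y)) =ᵐ[P] (fun x => g' (x, y)) := by
    filter_upwards [hsecy] with y hy
    refine ae_iff.2 (measure_mono_null ?_ hy)
    intro x hx
    exact hfg'sub hx
  refine ⟨?_, ?_, ?_, ?_⟩
  · filter_upwards [hint.prod_left_ae, haey] with y h1 h2
    exact h1.congr h2.symm
  · filter_upwards [hint.prod_right_ae, haex] with x h1 h2
    exact h1.congr h2.symm
  · calc (∫ p, f p ∂ Rstar) = ∫ p, g' p ∂ Rstar := integral_congr_ae hae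
      _ = ∫ p, g' p ∂(Rstar.trim hm) := integral_trim hm hg'sm
      _ = ∫ p, g' p ∂(P.prod Q) := by rw [htrim]
      _ = ∫ y, ∫ x, g' (x, y) ∂P ∂Q := integral_prod_symm g' hint
      _ = ∫ y, ∫ x, f (x, y) ∂P ∂Q := by
          refine integral_congr_ae ?_
          filter_upwards [haey] with y h using (integral_congr_ae h).symm
  · calc (∫ p, f p ∂ Rstar) = ∫ p, g' p ∂ Rstar := integral_congr_ae hae
      _ = ∫ p, g' p ∂(Rstar.trim hm) := integral_trim hm hg'sm
      _ = ∫ p, g' p ∂(P.prod Q) := by rw [htrim]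
      _ = ∫ x, ∫ y, g' (x, y) ∂Q ∂P := integral_prod g' hint
      _ = ∫ x, ∫ y, f (x, y) ∂Q ∂P := by
          refine integral_congr_ae ?_
          filter_upwards [haex] with x h using (integral_congr_ae h).symm
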